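/- Let (𝒜, A, A') be a quasi-twilled associative algebra over a field K with projections p : 𝒜 → A and p' : 𝒜 → A' determined by the decomposition 𝒜 = A ⊕ A', and let D : A → A' be a linear map. Define e^D : 𝒜 → 𝒜 by e^D(a) = a + D(p(a)). Then: (1) e^D is a linear bijection with inverse a ↦ a − D(p(a)); (2) the bilinear operation Ω^D(a,b) := (e^D)^{-1}(e^D(a)·e^D(b)) on 𝒜 is associative; (3) e^D is an algebra isomorphism from (𝒜, Ω^D) to (𝒜, ·); (4) A' is closed under Ω^D, so ((𝒜, Ω^D), A, A') is again a quasi-twilled associative algebra. -/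

import Mathlib

/-- `e^D(a) = a + D(p(a))`, where `p` is the projection onto `A` along `A'`. -/
noncomputable def eD {K 𝓐 : Type*} [Field K] [AddCommGroup 𝓐] [Module K 𝓐]
    {A A' : Submodule K 𝓐} (hcompl : IsCompl A A') (D : A →ₗ[K] A') (a : 𝓐) : 𝓐 :=
  a + ((D (A.linearProjOfIsCompl A' hcompl a) : A') : 𝓐)

/-- `a ↦ a − D(p(a))`, the claimed inverse of `e^D`. -/
noncomputable def eDinv {K 𝓐 : Type*} [Field K] [AddCommGroup 𝓐] [Module K 𝓐]
    {A A' : Submodule K 𝓐} (hcompl : IsCompl A A') (D : A →ₗ[K] A') (a : 𝓐) : 𝓐 :=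
  a - ((D (A.linearProjOfIsCompl A' hcompl a) : A') : 𝓐)

/-- The twisted multiplication `Ω^D(a,b) = (e^D)⁻¹(e^D(a)·e^D(b))`. -/
noncomputable def OmegaD {K 𝓐 : Type*} [Field K] [AddCommGroup 𝓐] [Module K 𝓐]
    (m : 𝓐 →ₗ[K] 𝓐 →ₗ[K] 𝓐)
    {A A' : Submodule K 𝓐} (hcompl : IsCompl A A') (D : A →ₗ[K] A') (a b : 𝓐) : 𝓐 :=
  eDinv hcompl D (m (eD hcompl D a) (eD hcompl D b))

section aux
variable {K 𝓐 : Type*} [Field K] [AddCommGroup 𝓐] [Module K 𝓐]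
  {A A' : Submodule K 𝓐} (hcompl : IsCompl A A') (D : A →ₗ[K] A')

lemma proj_eD (a : 𝓐) :
    A.linearProjOfIsCompl A' hcompl (eD hcompl D a)
      = A.linearProjOfIsCompl A' hcompl a := by
  simp [eD, map_add, Submodule.linearProjOfIsCompl, Submodule.projectionOnto_apply_right]

lemma proj_eDinv (a : 𝓐) :
    A.linearProjOfIsCompl A' hcompl (eDinv hcompl D a)
      = A.linearProjOfIsCompl A' hcompl a := by
  simp [eDinv, map_sub, Submodule.linearProjOfIsCompl, Submodule.projectionOnto_apply_right]

lemma eDinv_eD (a : 𝓐) : eDinv hcompl D (eD hcompl D a) = a := by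
  rw [eDinv, proj_eD]; simp [eD]

lemma eD_eDinv (a : 𝓐) : eD hcompl D (eDinv hcompl D a) = a := by
  rw [eD, proj_eDinv]; simp [eDinv]

lemma eD_mem (u : 𝓐) (hu : u ∈ A') : eD hcompl D u = u := by
  simp [eD, Submodule.linearProjOfIsCompl, Submodule.projectionOnto_apply_right hcompl ⟨u, hu⟩]

lemma eDinv_mem (u : 𝓐) (hu : u ∈ A') : eDinv hcompl D u = u := by
  simp [eDinv, Submodule.linearProjOfIsCompl, Submodule.projectionOnto_apply_right hcompl ⟨u, hu⟩]

end aux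

/-- for a quasi-twilled associative algebra `(𝒜, A, A')` and a linear
map `D : A → A'`: (1) `e^D` is a linear bijection with inverse `a ↦ a − D(p(a))`;
(2) `Ω^D` is associative; (3) `e^D` is an algebra isomorphism from `(𝒜, Ω^D)` to
`(𝒜, ·)`; (4) `A'` is closed under `Ω^D`. -/
theorem stmt10 {K 𝓐 : Type*} [Field K] [AddCommGroup 𝓐] [Module K 𝓐]
    (m : 𝓐 →ₗ[K] 𝓐 →ₗ[K] 𝓐)
    (assoc : ∀ a b c : 𝓐, m (m a b) c = m a (m b c))
    (A A' : Submodule K 𝓐) (hcompl : IsCompl A A')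
    (hA' : ∀ u ∈ A', ∀ v ∈ A', m u v ∈ A')
    (D : A →ₗ[K] A') :
    (IsLinearMap K (eD hcompl D) ∧ Function.Bijective (eD hcompl D) ∧
      (∀ a : 𝓐, eDinv hcompl D (eD hcompl D a) = a) ∧
      (∀ a : 𝓐, eD hcompl D (eDinv hcompl D a) = a)) ∧
    (∀ a b c : 𝓐,
      OmegaD m hcompl D (OmegaD m hcompl D a b) c
        = OmegaD m hcompl D a (OmegaD m hcompl D b c)) ∧
    (∀ a b : 𝓐, eD hcompl D (OmegaD m hcompl D a b) = m (eD hcompl D a) (eD hcompl D b)) ∧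
    (∀ u ∈ A', ∀ v ∈ A', OmegaD m hcompl D u v ∈ A') := by
  refine ⟨⟨?_, ?_, eDinv_eD hcompl D, eD_eDinv hcompl D⟩, ?_, ?_, ?_⟩
  · exact ⟨fun a b => by simp [eD, map_add, add_add_add_comm],
      fun c a => by simp [eD, map_smul, smul_add]⟩
  · exact Function.bijective_iff_has_inverse.2
      ⟨eDinv hcompl D, eDinv_eD hcompl D, eD_eDinv hcompl D⟩
  · intro a b c
    simp only [OmegaD, eD_eDinv, eDinv_eD, assoc]
  · intro a b
    simp [OmegaD, eD_eDinv]
  · intro u hu v hv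
    simpa [OmegaD, eD_mem hcompl D u hu, eD_mem hcompl D v hv,
      eDinv_mem hcompl D _ (hA' u hu v hv)] using hA' u hu v hv
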